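/- Let u_1, u_2, u_3, u_4, u_5 be unit vectors in ℝ³ with u_1 and u_2 linearly independent, and write c_{ij} = ⟨u_i, u_j⟩. Then for each pair (p,q) ∈ {(3,4), (3,5), (4,5)} the inner product c_{pq} satisfies [c_{pq} − c_{1p}c_{1q} − (c_{2p} − c_{12}c_{1p})(c_{2q} − c_{12}c_{1q})/(1 − c_{12}²)]² = Π_{r∈{p,q}} (1 − (c_{2r}² + c_{1r}² − 2 c_{2r} c_{1r} c_{12})/(1 − c_{12}²)). In particular each of ⟨u_3,u_4⟩, ⟨u_3,u_5⟩, ⟨u_4,u_5⟩ is one of exactly two values explicitly determined by the seven inner products c_{12}, c_{13}, c_{14}, c_{15}, c_{23}, c_{24}, c_{25}, i.e. by the seven angles α_{102}, α_{103}, α_{104}, α_{105}, α_{203}, α_{204}, α_{205}. -/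

import Mathlib

open RealInnerProductSpace
open Module

/-- For unit vectors `u₁, …, u₅` in `ℝ³` with `u₁, u₂` linearly independent,
each of the inner products `⟪u_p, u_q⟫` for `p, q ∈ {3,4,5}`, `p ≠ q`, satisfies an
explicit quadratic equation in terms of the seven inner products
`c₁₂, c₁₃, c₁₄, c₁₅, c₂₃, c₂₄, c₂₅`; in particular each is one of the two explicitly
determined roots. -/
theorem cos_angles_hexahedron_quadratic
    (u : Fin 5 → EuclideanSpace ℝ (Fin 3))
    (hu : ∀ i, ‖u i‖ = 1)
    (hind : LinearIndependent ℝ ![u 0, u 1])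
    (c : Fin 5 → Fin 5 → ℝ)
    (hc : ∀ i j, c i j = ⟪u i, u j⟫) :
    ∀ p q : Fin 5, 2 ≤ (p : ℕ) → 2 ≤ (q : ℕ) → p ≠ q →
      ((c p q - c 0 p * c 0 q
            - (c 1 p - c 0 1 * c 0 p) * (c 1 q - c 0 1 * c 0 q) / (1 - c 0 1 ^ 2)) ^ 2
          = (1 - ((c 1 p) ^ 2 + (c 0 p) ^ 2 - 2 * c 1 p * c 0 p * c 0 1) / (1 - c 0 1 ^ 2))
            * (1 - ((c 1 q) ^ 2 + (c 0 q) ^ 2 - 2 * c 1 q * c 0 q * c 0 1) / (1 - c 0 1 ^ 2))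
        ∧ (c p q = c 0 p * c 0 q
              + (c 1 p - c 0 1 * c 0 p) * (c 1 q - c 0 1 * c 0 q) / (1 - c 0 1 ^ 2)
              + Real.sqrt
                ((1 - ((c 1 p) ^ 2 + (c 0 p) ^ 2 - 2 * c 1 p * c 0 p * c 0 1) / (1 - c 0 1 ^ 2))
                  * (1 - ((c 1 q) ^ 2 + (c 0 q) ^ 2 - 2 * c 1 q * c 0 q * c 0 1) / (1 - c 0 1 ^ 2)))
          ∨ c p q = c 0 p * c 0 q
              + (c 1 p - c 0 1 * c 0 p) * (c 1 q - c 0 1 * c 0 q) / (1 - c 0 1 ^ 2)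
              - Real.sqrt
                ((1 - ((c 1 p) ^ 2 + (c 0 p) ^ 2 - 2 * c 1 p * c 0 p * c 0 1) / (1 - c 0 1 ^ 2))
                  * (1 - ((c 1 q) ^ 2 + (c 0 q) ^ 2 - 2 * c 1 q * c 0 q * c 0 1) / (1 - c 0 1 ^ 2))))) := by
  have h01 : c 0 1 < 1 := by
    rw [hc, inner_lt_one_iff_real_of_norm_eq_one (hu 0) (hu 1)]
    intro h
    have := LinearIndependent.pair_iff.1 hind 1 (-1) (by rw [h]; module)
    simp at this
  have h01' : -1 < c 0 1 := by
    have h2 : ⟪u 0, -(u 1)⟫ < 1 := by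
      rw [inner_lt_one_iff_real_of_norm_eq_one (hu 0) (by simp [hu 1])]
      intro h
      have := LinearIndependent.pair_iff.1 hind 1 1 (by rw [h]; module)
      simp at this
    rw [inner_neg_right, ← hc] at h2
    linarith
  have hdpos : 0 < 1 - c 0 1 ^ 2 := by nlinarith
  have hd : (1 - c 0 1 ^ 2) ≠ 0 := ne_of_gt hdpos
  have hcii : ∀ i, c i i = 1 := by
    intro i; rw [hc, real_inner_self_eq_norm_sq, hu i]; norm_num
  set r : Fin 5 → EuclideanSpace ℝ (Fin 3) := fun i =>
    u i - (c 0 i) • u 0 - ((c 1 i - c 0 1 * c 0 i)/(1 - c 0 1 ^ 2)) • (u 1 - (c 0 1) • u 0)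
    with hrdef
  have hr0 : ∀ i, ⟪u 0, r i⟫ = 0 := by
    intro i
    simp only [hrdef, inner_sub_right, real_inner_smul_right, ← hc]
    rw [hcii]; ring
  have hr1 : ∀ i, ⟪u 1, r i⟫ = 0 := by
    intro i
    have := real_inner_comm (u 0) (u 1)
    simp only [hrdef, inner_sub_right, real_inner_smul_right, ← hc]
    rw [hcii]
    have hcomm : c 1 0 = c 0 1 := by rw [hc, hc, real_inner_comm]
    rw [hcomm]; field_simp; ring
  have hinner : ∀ i j, ⟪r i, r j⟫ = c i j - c 0 i * c 0 j
      - (c 1 i - c 0 1 * c 0 i) * (c 1 j - c 0 1 * c 0 j) / (1 - c 0 1 ^ 2) := by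
    intro i j
    have e1 : ⟪r i, r j⟫ = ⟪r j, u i⟫ - c 0 i * ⟪r j, u 0⟫
        - ((c 1 i - c 0 1 * c 0 i)/(1 - c 0 1 ^ 2)) * (⟪r j, u 1⟫ - c 0 1 * ⟪r j, u 0⟫) := by
      rw [real_inner_comm]
      simp only [hrdef, inner_sub_right, real_inner_smul_right]
    have e0 : ⟪r j, u 0⟫ = 0 := by rw [real_inner_comm]; exact hr0 j
    have e1' : ⟪r j, u 1⟫ = 0 := by rw [real_inner_comm]; exact hr1 j
    rw [e1, e0, e1']
    have e2 : ⟪r j, u i⟫ = c j i - c 0 j * c 0 i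
        - ((c 1 j - c 0 1 * c 0 j)/(1 - c 0 1 ^ 2)) * (c 1 i - c 0 1 * c 0 i) := by
      simp only [hrdef, inner_sub_left, real_inner_smul_left, ← hc]
    rw [e2]
    have hcomm : c j i = c i j := by rw [hc, hc, real_inner_comm]
    rw [hcomm]; ring
  -- dimension argument
  set K : Submodule ℝ (EuclideanSpace ℝ (Fin 3)) := Submodule.span ℝ (Set.range ![u 0, u 1])
    with hK
  have hKr : finrank ℝ K = 2 := by
    rw [hK, finrank_span_eq_card hind]; simp
  have hKo : finrank ℝ Kᗮ = 1 := by
    have := K.finrank_add_finrank_orthogonal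
    rw [hKr, finrank_euclideanSpace_fin] at this
    omega
  have hmem : ∀ i, r i ∈ Kᗮ := by
    intro i
    rw [Submodule.mem_orthogonal]
    intro x hx
    induction hx using Submodule.span_induction with
    | mem x hx =>
      obtain ⟨j, rfl⟩ := hx
      fin_cases j
      · exact hr0 i
      · exact hr1 i
    | zero => simp
    | add x y _ _ hx hy => rw [inner_add_left, hx, hy, add_zero]
    | smul a x _ hx => rw [real_inner_smul_left, hx, mul_zero]
  obtain ⟨v, -, hv⟩ := finrank_eq_one_iff'.1 hKo
  intro p q _ _ _
  obtain ⟨a, ha⟩ := hv ⟨r p, hmem p⟩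
  obtain ⟨b, hb⟩ := hv ⟨r q, hmem q⟩
  have ha' : r p = a • (v : EuclideanSpace ℝ (Fin 3)) := by
    have := congrArg Subtype.val ha; simpa using this.symm
  have hb' : r q = b • (v : EuclideanSpace ℝ (Fin 3)) := by
    have := congrArg Subtype.val hb; simpa using this.symm
  have key : ⟪r p, r q⟫ ^ 2 = ⟪r p, r p⟫ * ⟪r q, r q⟫ := by
    rw [ha', hb']
    simp only [real_inner_smul_left, real_inner_smul_right]
    ring
  have eq1 : (c p q - c 0 p * c 0 q
      - (c 1 p - c 0 1 * c 0 p) * (c 1 q - c 0 1 * c 0 q) / (1 - c 0 1 ^ 2)) ^ 2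
      = (1 - ((c 1 p) ^ 2 + (c 0 p) ^ 2 - 2 * c 1 p * c 0 p * c 0 1) / (1 - c 0 1 ^ 2))
        * (1 - ((c 1 q) ^ 2 + (c 0 q) ^ 2 - 2 * c 1 q * c 0 q * c 0 1) / (1 - c 0 1 ^ 2)) := by
    rw [hinner, hinner, hinner] at key
    rw [key, hcii, hcii]
    congr 1 <;> field_simp <;> ring
  refine ⟨eq1, ?_⟩
  set A := c p q - c 0 p * c 0 q
      - (c 1 p - c 0 1 * c 0 p) * (c 1 q - c 0 1 * c 0 q) / (1 - c 0 1 ^ 2) with hA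
  have hsqrt : Real.sqrt
      ((1 - ((c 1 p) ^ 2 + (c 0 p) ^ 2 - 2 * c 1 p * c 0 p * c 0 1) / (1 - c 0 1 ^ 2))
        * (1 - ((c 1 q) ^ 2 + (c 0 q) ^ 2 - 2 * c 1 q * c 0 q * c 0 1) / (1 - c 0 1 ^ 2))) = |A| := by
    rw [← eq1, Real.sqrt_sq_eq_abs]
  rcases le_or_gt 0 A with h | h
  · left; rw [hsqrt, abs_of_nonneg h]; rw [hA] at *; linarith
  · right; rw [hsqrt, abs_of_neg h]; rw [hA] at *; linarith
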